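/- Let (e₁, f₁) and (e₂, f₂) be two mutually orthogonal hyperbolic pairs, and set H_m := (1 − ι e_m * ι f_m)/2 for m = 1, 2 (the Cartan elements H(ε_m)). Then, with ⁅x, y⁆ := x*y − y*x: (a) ⁅H₁, H₂⁆ = 0; (b) ⁅H₁, ι f₁ * ι f₂ / 2⁆ = ι f₁ * ι f₂ / 2 and ⁅H₂, ι f₁ * ι f₂ / 2⁆ = ι f₁ * ι f₂ / 2; (c) ⁅H₁, ι e₁ * ι f₂ / 2⁆ = −ι e₁ * ι f₂ / 2 and ⁅H₂, ι e₁ * ι f₂ / 2⁆ = ι e₁ * ι f₂ / 2; (d) ⁅H₁, ι e₁ * ι e₂ / 2⁆ = −ι e₁ * ι e₂ / 2 and ⁅H₂, ι e₁ * ι e₂ / 2⁆ = −ι e₁ * ι e₂ / 2. (These verify that f_if_j/2, e_if_j/2, e_ie_j/2 realize the root vectors X(ε_i+ε_j), X(−ε_i+ε_j), X(−ε_i−ε_j) of so(2n) inside the Clifford algebra.) -/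
import Mathlib


open CliffordAlgebra QuadraticMap

private lemma clifford_root_aux {R : Type*} [Ring R] [Algebra ℂ R] (a b c d : R)
    (haa : a * a = 0) (hbb : b * b = 0) (hcc : c * c = 0) (hdd : d * d = 0)
    (hba : b * a = 2 - a * b) (hdc : d * c = 2 - c * d)
    (hca : c * a = -(a * c)) (hda : d * a = -(a * d))
    (hcb : c * b = -(b * c)) (hdb : d * b = -(b * d)) :
    a * b * (c * d) = c * d * (a * b) ∧
    a * b * (b * d) = 0 ∧ b * d * (a * b) = (2 : ℂ) • (b * d) ∧
    c * d * (b * d) = 0 ∧ b * d * (c * d) = (2 : ℂ) • (b * d) ∧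
    a * b * (a * d) = (2 : ℂ) • (a * d) ∧ a * d * (a * b) = 0 ∧
    c * d * (a * d) = 0 ∧ a * d * (c * d) = (2 : ℂ) • (a * d) ∧
    a * b * (a * c) = (2 : ℂ) • (a * c) ∧ a * c * (a * b) = 0 ∧
    c * d * (a * c) = (2 : ℂ) • (a * c) ∧ a * c * (c * d) = 0 := by
  have htwo : ∀ x : R, (2 : R) * x = (2 : ℂ) • x := by
    intro x; rw [Algebra.smul_def, map_ofNat]
  have haa' : ∀ t : R, a * (a * t) = 0 := by intro t; rw [← mul_assoc, haa, zero_mul]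
  have hbb' : ∀ t : R, b * (b * t) = 0 := by intro t; rw [← mul_assoc, hbb, zero_mul]
  have hcc' : ∀ t : R, c * (c * t) = 0 := by intro t; rw [← mul_assoc, hcc, zero_mul]
  have hdd' : ∀ t : R, d * (d * t) = 0 := by intro t; rw [← mul_assoc, hdd, zero_mul]
  have hba' : ∀ t : R, b * (a * t) = (2 : ℂ) • t - a * (b * t) := by
    intro t; rw [← mul_assoc, hba, sub_mul, mul_assoc, htwo]
  have hdc' : ∀ t : R, d * (c * t) = (2 : ℂ) • t - c * (d * t) := by
    intro t; rw [← mul_assoc, hdc, sub_mul, mul_assoc, htwo]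
  have htwo' : ∀ x : R, x * (2 : R) = (2 : ℂ) • x := by
    intro x; rw [mul_two, two_smul ℂ x]
  have hca' : ∀ t : R, c * (a * t) = -(a * (c * t)) := by
    intro t; rw [← mul_assoc, hca, neg_mul, mul_assoc]
  have hda' : ∀ t : R, d * (a * t) = -(a * (d * t)) := by
    intro t; rw [← mul_assoc, hda, neg_mul, mul_assoc]
  have hcb' : ∀ t : R, c * (b * t) = -(b * (c * t)) := by
    intro t; rw [← mul_assoc, hcb, neg_mul, mul_assoc]
  have hdb' : ∀ t : R, d * (b * t) = -(b * (d * t)) := by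
    intro t; rw [← mul_assoc, hdb, neg_mul, mul_assoc]
  refine ⟨?_, ?_, ?_, ?_, ?_, ?_, ?_, ?_, ?_, ?_, ?_, ?_, ?_⟩ <;>
  · simp only [mul_assoc, haa', hbb', hcc', hdd', hba', hdc', hca', hda', hcb', hdb', htwo',
      haa, hbb, hcc, hdd, hba, hdc, hca, hda, hcb, hdb,
      mul_sub, sub_mul, mul_neg, neg_mul, mul_zero, zero_mul, mul_smul_comm, smul_mul_assoc,
      mul_one, one_mul, smul_sub, smul_neg, neg_neg, sub_zero, zero_sub, neg_zero, smul_zero]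
    try module

/-- For two mutually orthogonal hyperbolic pairs `(e₁, f₁)`, `(e₂, f₂)` and the
Cartan elements `Hₘ = (1 - ι eₘ * ι fₘ)/2`, the commutators with the degree-two
elements `ι f₁ * ι f₂ / 2`, `ι e₁ * ι f₂ / 2`, `ι e₁ * ι e₂ / 2` realize the root
vectors `X(ε₁+ε₂)`, `X(-ε₁+ε₂)`, `X(-ε₁-ε₂)` of `so(2n)`. -/
theorem clifford_root_vectors {V : Type*} [AddCommGroup V] [Module ℂ V]
    (Q : QuadraticForm ℂ V) (e₁ f₁ e₂ f₂ : V)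
    (hQe₁ : Q e₁ = 0) (hQf₁ : Q f₁ = 0) (hef₁ : polar Q e₁ f₁ = 2)
    (hQe₂ : Q e₂ = 0) (hQf₂ : Q f₂ = 0) (hef₂ : polar Q e₂ f₂ = 2)
    (h₁ : polar Q e₁ e₂ = 0) (h₂ : polar Q e₁ f₂ = 0)
    (h₃ : polar Q f₁ e₂ = 0) (h₄ : polar Q f₁ f₂ = 0)
    (H₁ H₂ : CliffordAlgebra Q)
    (hH₁ : H₁ = (2⁻¹ : ℂ) • (1 - ι Q e₁ * ι Q f₁))
    (hH₂ : H₂ = (2⁻¹ : ℂ) • (1 - ι Q e₂ * ι Q f₂)) :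
    ⁅H₁, H₂⁆ = 0 ∧
    ⁅H₁, (2⁻¹ : ℂ) • (ι Q f₁ * ι Q f₂)⁆ = (2⁻¹ : ℂ) • (ι Q f₁ * ι Q f₂) ∧
    ⁅H₂, (2⁻¹ : ℂ) • (ι Q f₁ * ι Q f₂)⁆ = (2⁻¹ : ℂ) • (ι Q f₁ * ι Q f₂) ∧
    ⁅H₁, (2⁻¹ : ℂ) • (ι Q e₁ * ι Q f₂)⁆ = -((2⁻¹ : ℂ) • (ι Q e₁ * ι Q f₂)) ∧
    ⁅H₂, (2⁻¹ : ℂ) • (ι Q e₁ * ι Q f₂)⁆ = (2⁻¹ : ℂ) • (ι Q e₁ * ι Q f₂) ∧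
    ⁅H₁, (2⁻¹ : ℂ) • (ι Q e₁ * ι Q e₂)⁆ = -((2⁻¹ : ℂ) • (ι Q e₁ * ι Q e₂)) ∧
    ⁅H₂, (2⁻¹ : ℂ) • (ι Q e₁ * ι Q e₂)⁆ = -((2⁻¹ : ℂ) • (ι Q e₁ * ι Q e₂)) := by
  set a := ι Q e₁ with ha
  set b := ι Q f₁ with hb
  set c := ι Q e₂ with hc
  set d := ι Q f₂ with hd
  have hsq : ∀ (v : V) (h : Q v = 0), ι Q v * ι Q v = 0 := by
    intro v h; rw [ι_sq_scalar, h, map_zero]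
  have hswap : ∀ x y : V, ι Q y * ι Q x =
      algebraMap ℂ (CliffordAlgebra Q) (polar Q x y) - ι Q x * ι Q y := by
    intro x y
    exact eq_sub_of_add_eq (by rw [add_comm]; exact ι_mul_ι_add_swap x y)
  have hba : b * a = 2 - a * b := by rw [hswap e₁ f₁, hef₁, map_ofNat]
  have hdc : d * c = 2 - c * d := by rw [hswap e₂ f₂, hef₂, map_ofNat]
  have hca : c * a = -(a * c) := by rw [hswap e₁ e₂, h₁, map_zero, zero_sub]
  have hda : d * a = -(a * d) := by rw [hswap e₁ f₂, h₂, map_zero, zero_sub]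
  have hcb : c * b = -(b * c) := by rw [hswap f₁ e₂, h₃, map_zero, zero_sub]
  have hdb : d * b = -(b * d) := by rw [hswap f₁ f₂, h₄, map_zero, zero_sub]
  obtain ⟨P0, P1, P2, P3, P4, P5, P6, P7, P8, P9, P10, P11, P12⟩ :=
    clifford_root_aux a b c d (hsq e₁ hQe₁) (hsq f₁ hQf₁) (hsq e₂ hQe₂) (hsq f₂ hQf₂)
      hba hdc hca hda hcb hdb
  refine ⟨?_, ?_, ?_, ?_, ?_, ?_, ?_⟩
  · rw [Ring.lie_def, hH₁, hH₂, smul_mul_smul_comm, smul_mul_smul_comm, ← smul_sub,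
      show (1 - a * b) * (1 - c * d) - (1 - c * d) * (1 - a * b)
        = a * b * (c * d) - c * d * (a * b) from by noncomm_ring, P0, sub_self, smul_zero]
  · rw [Ring.lie_def, hH₁, smul_mul_smul_comm, smul_mul_smul_comm, ← smul_sub,
      show (1 - a * b) * (b * d) - b * d * (1 - a * b)
        = b * d * (a * b) - a * b * (b * d) from by noncomm_ring, P1, P2]
    module
  · rw [Ring.lie_def, hH₂, smul_mul_smul_comm, smul_mul_smul_comm, ← smul_sub,
      show (1 - c * d) * (b * d) - b * d * (1 - c * d)
        = b * d * (c * d) - c * d * (b * d) from by noncomm_ring, P3, P4]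
    module
  · rw [Ring.lie_def, hH₁, smul_mul_smul_comm, smul_mul_smul_comm, ← smul_sub,
      show (1 - a * b) * (a * d) - a * d * (1 - a * b)
        = a * d * (a * b) - a * b * (a * d) from by noncomm_ring, P5, P6]
    module
  · rw [Ring.lie_def, hH₂, smul_mul_smul_comm, smul_mul_smul_comm, ← smul_sub,
      show (1 - c * d) * (a * d) - a * d * (1 - c * d)
        = a * d * (c * d) - c * d * (a * d) from by noncomm_ring, P7, P8]
    module
  · rw [Ring.lie_def, hH₁, smul_mul_smul_comm, smul_mul_smul_comm, ← smul_sub,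
      show (1 - a * b) * (a * c) - a * c * (1 - a * b)
        = a * c * (a * b) - a * b * (a * c) from by noncomm_ring, P9, P10]
    module
  · rw [Ring.lie_def, hH₂, smul_mul_smul_comm, smul_mul_smul_comm, ← smul_sub,
      show (1 - c * d) * (a * c) - a * c * (1 - c * d)
        = a * c * (c * d) - c * d * (a * c) from by noncomm_ring, P11, P12]
    module
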